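/- arXiv:1707.00407 — 6 statements merged into one kernel-verified Lean document; each statement's English description precedes it below -/
import Mathlib

section
/- Let Φ ∈ ℝ^{N×n} with ΦᵀΦ invertible, P positive definite, σ² > 0, Q = ΦPΦᵀ + σ²I_N, S = P + σ²(ΦᵀΦ)^{-1}. Then ΦᵀQ^{-1}Q^{-1}Φ = S^{-1}(ΦᵀΦ)^{-1}S^{-1} (using symmetry of P, Q, S). -/
open Matrix

lemma smul_posDef {n : ℕ} {M : Matrix (Fin n) (Fin n) ℝ} (hM : M.PosDef)
    {c : ℝ} (hc : 0 < c) : (c • M).PosDef := by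
  refine posDef_iff_dotProduct_mulVec.mpr ⟨?_, fun x hx => ?_⟩
  · unfold Matrix.IsHermitian
    rw [conjTranspose_smul, hM.1.eq]
    simp
  · rw [smul_mulVec, dotProduct_smul, smul_eq_mul]
    exact mul_pos hc ((posDef_iff_dotProduct_mulVec.mp hM).2 hx)

theorem phiT_Qinv_sq_phi {n N : ℕ}
    (Φ : Matrix (Fin N) (Fin n) ℝ) (hΦ : IsUnit (Φᵀ * Φ))
    (P : Matrix (Fin n) (Fin n) ℝ) (hP : P.PosDef)
    (σ2 : ℝ) (hσ : 0 < σ2)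
    (Q : Matrix (Fin N) (Fin N) ℝ) (hQ : Q = Φ * P * Φᵀ + σ2 • 1)
    (S : Matrix (Fin n) (Fin n) ℝ) (hS : S = P + σ2 • (Φᵀ * Φ)⁻¹) :
    Φᵀ * Q⁻¹ * Q⁻¹ * Φ = S⁻¹ * (Φᵀ * Φ)⁻¹ * S⁻¹ := by
  have htc : Φᵀ = Φᴴ := by ext i j; simp
  -- Φᵀ * Φ is positive definite
  have hsemi : (Φᵀ * Φ).PosSemidef := by
    rw [htc]; exact posSemidef_conjTranspose_mul_self Φ
  have hinj : Function.Injective ((Φᵀ * Φ).mulVec) :=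
    Matrix.mulVec_injective_iff_isUnit.mpr hΦ
  have hΦΦpd : (Φᵀ * Φ).PosDef := by
    refine posDef_iff_dotProduct_mulVec.mpr ⟨hsemi.1, fun x hx => lt_of_le_of_ne (hsemi.dotProduct_mulVec_nonneg x) fun h => hx ?_⟩
    have h0 : (Φᵀ * Φ) *ᵥ x = 0 := (hsemi.dotProduct_mulVec_zero_iff x).mp h.symm
    have := hinj (a₁ := x) (a₂ := 0) (by simpa using h0)
    exact this
  -- S positive definite
  have hSpd : S.PosDef := by
    rw [hS]
    exact hP.add_posSemidef (smul_posDef hΦΦpd.inv hσ).posSemidef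
  -- Q positive definite
  have hQpd : Q.PosDef := by
    rw [hQ]
    refine Matrix.PosDef.posSemidef_add ?_ (smul_posDef Matrix.PosDef.one hσ)
    have := hP.posSemidef.mul_mul_conjTranspose_same Φ
    rwa [← htc] at this
  have hdΦ : IsUnit (Φᵀ * Φ).det := isUnit_iff_isUnit_det _ |>.mp hΦ
  have hdS : IsUnit S.det := hSpd.isUnit.map detMonoidHom
  have hdQ : IsUnit Q.det := hQpd.isUnit.map detMonoidHom
  -- key identity Q * Φ = Φ * S * (Φᵀ * Φ)
  have hkey : Q * Φ = Φ * S * (Φᵀ * Φ) := by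
    rw [hQ, hS, Matrix.add_mul, Matrix.mul_add, Matrix.add_mul, Matrix.smul_mul, Matrix.one_mul,
      Matrix.mul_smul, Matrix.smul_mul,
      Matrix.nonsing_inv_mul_cancel_right _ _ hdΦ,
      Matrix.mul_assoc (Φ * P) Φᵀ Φ, Matrix.mul_assoc Φ P (Φᵀ * Φ)]
  -- Q⁻¹ * Φ = Φ * (Φᵀ * Φ)⁻¹ * S⁻¹
  have haux : Q * (Φ * (Φᵀ * Φ)⁻¹ * S⁻¹) = Φ := by
    rw [← Matrix.mul_assoc, ← Matrix.mul_assoc, hkey,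
      Matrix.mul_nonsing_inv_cancel_right _ _ hdΦ,
      Matrix.mul_nonsing_inv_cancel_right _ _ hdS]
  have hmain : Q⁻¹ * Φ = Φ * (Φᵀ * Φ)⁻¹ * S⁻¹ := by
    conv_lhs => rw [← haux]
    rw [Matrix.nonsing_inv_mul_cancel_left _ _ hdQ]
  -- symmetry facts
  have hQsymm : (Q⁻¹)ᵀ = Q⁻¹ := by
    rw [Matrix.transpose_nonsing_inv, show Qᵀ = Qᴴ by ext i j; simp, hQpd.1.eq]
  have hSsymm : (S⁻¹)ᵀ = S⁻¹ := by
    rw [Matrix.transpose_nonsing_inv, show Sᵀ = Sᴴ by ext i j; simp, hSpd.1.eq]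
  have hXsymm : ((Φᵀ * Φ)⁻¹)ᵀ = (Φᵀ * Φ)⁻¹ := by
    rw [Matrix.transpose_nonsing_inv, show (Φᵀ * Φ)ᵀ = (Φᵀ * Φ)ᴴ by ext i j; simp,
      hΦΦpd.1.eq]
  have hleft : Φᵀ * Q⁻¹ = S⁻¹ * (Φᵀ * Φ)⁻¹ * Φᵀ := by
    have h := congrArg Matrix.transpose hmain
    rw [transpose_mul, transpose_mul, transpose_mul,
      hQsymm, hSsymm, hXsymm] at h
    rw [h, Matrix.mul_assoc]
  calc Φᵀ * Q⁻¹ * Q⁻¹ * Φ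
      = (Φᵀ * Q⁻¹) * (Q⁻¹ * Φ) := by rw [Matrix.mul_assoc, Matrix.mul_assoc]
    _ = (S⁻¹ * (Φᵀ * Φ)⁻¹ * Φᵀ) * (Φ * (Φᵀ * Φ)⁻¹ * S⁻¹) := by rw [hleft, hmain]
    _ = S⁻¹ * (Φᵀ * Φ)⁻¹ * S⁻¹ := by
        rw [Matrix.mul_assoc (S⁻¹ * (Φᵀ * Φ)⁻¹) Φᵀ,
          ← Matrix.mul_assoc Φᵀ (Φ * (Φᵀ * Φ)⁻¹) S⁻¹,
          ← Matrix.mul_assoc Φᵀ Φ (Φᵀ * Φ)⁻¹,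
          Matrix.mul_nonsing_inv _ hdΦ, Matrix.one_mul]
end

section
/- Let P be symmetric positive definite, A positive definite, σ² > 0, Φ ∈ ℝ^{N×n} with ΦᵀΦ invertible, θ₀ ∈ ℝ^n nonzero. For 0 < β < 2σ²/(θ₀ᵀAθ₀), the matrix σ²[2A + βA(ΦᵀΦ)^{-1}A] − βAθ₀θ₀ᵀA is positive definite. -/
open Matrix

lemma vecMulVec_mulVec' {n : ℕ} (a b v : Fin n → ℝ) :
    vecMulVec a b *ᵥ v = (b ⬝ᵥ v) • a := by
  ext j
  simp [Matrix.mulVec, vecMulVec_apply, dotProduct, Finset.mul_sum, mul_assoc, mul_comm,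
    mul_left_comm]

lemma cauchy_schwarz_A {n : ℕ} {A : Matrix (Fin n) (Fin n) ℝ} (hA : A.PosSemidef)
    (u x : Fin n → ℝ) :
    (u ⬝ᵥ A *ᵥ x) ^ 2 ≤ (u ⬝ᵥ A *ᵥ u) * (x ⬝ᵥ A *ᵥ x) := by
  have hsym : ∀ v w : Fin n → ℝ, v ⬝ᵥ A *ᵥ w = w ⬝ᵥ A *ᵥ v := by
    intro v w
    have hAt : Aᵀ = A := by
      have := hA.isHermitian.eq
      simpa using this
    rw [dotProduct_mulVec, ← mulVec_transpose, hAt, dotProduct_comm]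
  have key : ∀ t : ℝ, 0 ≤ (u ⬝ᵥ A *ᵥ u) * (t * t) + (2 * (u ⬝ᵥ A *ᵥ x)) * t
      + (x ⬝ᵥ A *ᵥ x) := by
    intro t
    have h0 := hA.dotProduct_mulVec_nonneg (t • u + x)
    have hexp : (t • u + x) ⬝ᵥ A *ᵥ (t • u + x)
        = (u ⬝ᵥ A *ᵥ u) * (t * t) + (2 * (u ⬝ᵥ A *ᵥ x)) * t + (x ⬝ᵥ A *ᵥ x) := by
      rw [mulVec_add, mulVec_smul, dotProduct_add, add_dotProduct, add_dotProduct,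
        smul_dotProduct, smul_dotProduct, dotProduct_smul, dotProduct_smul,
        hsym x u]
      ring_nf
    rw [star_trivial, hexp] at h0
    exact h0
  have hd := discrim_le_zero key
  rw [discrim] at hd
  nlinarith [hd]

theorem key_posdef_inequality {n N : ℕ}
    (P : Matrix (Fin n) (Fin n) ℝ) (hP : P.PosDef)
    (A : Matrix (Fin n) (Fin n) ℝ) (hA : A.PosDef)
    (σ2 : ℝ) (hσ : 0 < σ2)
    (Φ : Matrix (Fin N) (Fin n) ℝ) (hΦ : IsUnit (Φᵀ * Φ))
    (θ0 : Fin n → ℝ) (hθ0 : θ0 ≠ 0)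
    (β : ℝ) (hβ : 0 < β) (hβ' : β < 2 * σ2 / (θ0 ⬝ᵥ A *ᵥ θ0)) :
    (σ2 • ((2 : ℝ) • A + β • (A * (Φᵀ * Φ)⁻¹ * A))
      - β • (A * vecMulVec θ0 θ0 * A)).PosDef := by
  have hAt : Aᵀ = A := by simpa using hA.isHermitian.eq
  -- ΦᵀΦ is PosDef
  have hG : (Φᵀ * Φ).PosDef := by
    refine PosDef.of_dotProduct_mulVec_pos (by simpa using isHermitian_conjTranspose_mul_self Φ) fun x hx => ?_
    have hΦx : Φ *ᵥ x ≠ 0 := by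
      intro h
      apply hx
      have h2 : (Φᵀ * Φ) *ᵥ x = 0 := by
        rw [← mulVec_mulVec, h, mulVec_zero]
      have hinv := hΦ.unit⁻¹
      calc x = (Φᵀ * Φ)⁻¹ *ᵥ ((Φᵀ * Φ) *ᵥ x) := by
              rw [mulVec_mulVec, Matrix.nonsing_inv_mul _
                ((Matrix.isUnit_iff_isUnit_det _).mp hΦ), one_mulVec]
        _ = 0 := by rw [h2, mulVec_zero]
    have : x ⬝ᵥ (Φᵀ * Φ) *ᵥ x = (Φ *ᵥ x) ⬝ᵥ (Φ *ᵥ x) := by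
      rw [← mulVec_mulVec, dotProduct_mulVec, ← mulVec_transpose, transpose_transpose]
    rw [star_trivial, this]
    have hne : Φ *ᵥ x ⬝ᵥ Φ *ᵥ x ≠ 0 := fun h => hΦx (dotProduct_self_eq_zero.mp h)
    have hge : 0 ≤ Φ *ᵥ x ⬝ᵥ Φ *ᵥ x := Finset.sum_nonneg fun i _ => mul_self_nonneg _
    exact hge.lt_of_ne (Ne.symm hne)
  have hGinv : (Φᵀ * Φ)⁻¹.PosDef := hG.inv
  refine PosDef.of_dotProduct_mulVec_pos ?_ ?_
  · -- Hermitian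
    have h1 : (A * (Φᵀ * Φ)⁻¹ * A).IsHermitian := by
      unfold Matrix.IsHermitian
      simp only [conjTranspose_mul, hA.isHermitian.eq, hGinv.isHermitian.eq]
      rw [mul_assoc]
    have hv : (vecMulVec θ0 θ0).IsHermitian := by
      ext i j; simp [vecMulVec_apply, mul_comm]
    have h2 : (A * vecMulVec θ0 θ0 * A).IsHermitian := by
      unfold Matrix.IsHermitian
      simp only [conjTranspose_mul, hA.isHermitian.eq, hv.eq]
      rw [mul_assoc]
    have hsm : ∀ (r : ℝ) (M : Matrix (Fin n) (Fin n) ℝ), M.IsHermitian → (r • M).IsHermitian := by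
      intro r M hM
      unfold Matrix.IsHermitian at *
      rw [conjTranspose_smul, hM]
      simp
    exact (hsm σ2 _ ((hsm 2 _ hA.isHermitian).add (hsm β _ h1))).sub (hsm β _ h2)
  · intro x hx
    -- quadratic form computation
    set y := A *ᵥ x with hy
    have hxy : ∀ M : Matrix (Fin n) (Fin n) ℝ, x ⬝ᵥ (A * M * A) *ᵥ x = y ⬝ᵥ M *ᵥ y := by
      intro M
      rw [← mulVec_mulVec, ← mulVec_mulVec, dotProduct_mulVec, ← mulVec_transpose, hAt]
    have hq1 : x ⬝ᵥ (A * vecMulVec θ0 θ0 * A) *ᵥ x = (θ0 ⬝ᵥ y) ^ 2 := by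
      rw [hxy, vecMulVec_mulVec', dotProduct_smul, smul_eq_mul, dotProduct_comm y θ0]
      ring
    have hq2 : 0 ≤ y ⬝ᵥ (Φᵀ * Φ)⁻¹ *ᵥ y := by
      have := hGinv.posSemidef.dotProduct_mulVec_nonneg y; rwa [star_trivial] at this
    have hc : 0 < x ⬝ᵥ A *ᵥ x := by
      have := hA.dotProduct_mulVec_pos hx; rwa [star_trivial] at this
    have ha : 0 < θ0 ⬝ᵥ A *ᵥ θ0 := by
      have := hA.dotProduct_mulVec_pos hθ0; rwa [star_trivial] at this
    have hcs : (θ0 ⬝ᵥ y) ^ 2 ≤ (θ0 ⬝ᵥ A *ᵥ θ0) * (x ⬝ᵥ A *ᵥ x) :=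
      cauchy_schwarz_A hA.posSemidef θ0 x
    have hβa : β * (θ0 ⬝ᵥ A *ᵥ θ0) < 2 * σ2 := by
      rw [lt_div_iff₀ ha] at hβ'
      linarith
    have hexpand : x ⬝ᵥ (σ2 • ((2 : ℝ) • A + β • (A * (Φᵀ * Φ)⁻¹ * A))
        - β • (A * vecMulVec θ0 θ0 * A)) *ᵥ x
        = σ2 * (2 * (x ⬝ᵥ A *ᵥ x) + β * (y ⬝ᵥ (Φᵀ * Φ)⁻¹ *ᵥ y))
          - β * (θ0 ⬝ᵥ y) ^ 2 := by
      rw [sub_mulVec, dotProduct_sub, smul_mulVec, smul_mulVec,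
        dotProduct_smul, dotProduct_smul, add_mulVec, dotProduct_add,
        smul_mulVec, smul_mulVec, dotProduct_smul, dotProduct_smul,
        hxy, hq1]
      simp only [smul_eq_mul]
    rw [star_trivial, hexpand]
    nlinarith [mul_le_mul_of_nonneg_left hcs hβ.le, mul_nonneg hσ.le (mul_nonneg hβ.le hq2)]
end

section
/- Let M(β) := σ²(ΦᵀΦ + βA)^{-1}ΦᵀΦ(ΦᵀΦ + βA)^{-1} + β²(ΦᵀΦ + βA)^{-1}Aθ₀θ₀ᵀA(ΦᵀΦ + βA)^{-1} be the MSE matrix of the regularized LS estimator with regularization βA. If A is symmetric positive definite, θ₀ ≠ 0, and 0 < β < 2σ²/(θ₀ᵀAθ₀), then M(0) − M(β) is positive definite, where M(0) = σ²(ΦᵀΦ)^{-1}. -/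
open Matrix

/-- Cauchy–Schwarz for a real positive definite bilinear form. -/
lemma posdef_cauchy_schwarz {n : ℕ} {A : Matrix (Fin n) (Fin n) ℝ} (hA : A.PosDef)
    (u v : Fin n → ℝ) : (u ⬝ᵥ A *ᵥ v) ^ 2 ≤ (u ⬝ᵥ A *ᵥ u) * (v ⬝ᵥ A *ᵥ v) := by
  have hAT : Aᵀ = A := by
    have := hA.1
    rwa [IsHermitian, conjTranspose_eq_transpose_of_trivial] at this
  have hsymm : ∀ a b : Fin n → ℝ, a ⬝ᵥ A *ᵥ b = b ⬝ᵥ A *ᵥ a := by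
    intro a b
    rw [dotProduct_mulVec, ← mulVec_transpose, hAT, dotProduct_comm]
  by_cases hu : u = 0
  · simp [hu]
  have hc : 0 < u ⬝ᵥ A *ᵥ u := by simpa using hA.dotProduct_mulVec_pos hu
  set t : ℝ := (u ⬝ᵥ A *ᵥ v) / (u ⬝ᵥ A *ᵥ u) with ht
  have hq : 0 ≤ (v - t • u) ⬝ᵥ A *ᵥ (v - t • u) := by
    simpa using hA.posSemidef.dotProduct_mulVec_nonneg (v - t • u)
  have hexp : (v - t • u) ⬝ᵥ A *ᵥ (v - t • u)
      = v ⬝ᵥ A *ᵥ v - 2 * t * (u ⬝ᵥ A *ᵥ v) + t ^ 2 * (u ⬝ᵥ A *ᵥ u) := by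
    rw [mulVec_sub, mulVec_smul, dotProduct_sub, sub_dotProduct, sub_dotProduct,
      smul_dotProduct, dotProduct_smul, smul_dotProduct, hsymm v u]
    simp [smul_eq_mul]; ring
  rw [hexp] at hq
  have h2 : t * (u ⬝ᵥ A *ᵥ u) = u ⬝ᵥ A *ᵥ v := by
    rw [ht]; field_simp
  nlinarith [hq, hc, sq_nonneg t]

theorem mse_matrix_decrease {n N : ℕ}
    (Φ : Matrix (Fin N) (Fin n) ℝ) (hΦ : (Φᵀ * Φ).PosDef)
    (A : Matrix (Fin n) (Fin n) ℝ) (hA : A.PosDef)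
    (σ2 : ℝ) (hσ : 0 < σ2)
    (θ0 : Fin n → ℝ) (hθ0 : θ0 ≠ 0)
    (β : ℝ) (hβ : 0 < β) (hβ' : β < 2 * σ2 / (θ0 ⬝ᵥ A *ᵥ θ0))
    (M : Matrix (Fin n) (Fin n) ℝ)
    (hM : M = σ2 • ((Φᵀ * Φ + β • A)⁻¹ * (Φᵀ * Φ) * (Φᵀ * Φ + β • A)⁻¹)
      + (β ^ 2) • ((Φᵀ * Φ + β • A)⁻¹ * A * vecMulVec θ0 θ0 * A
          * (Φᵀ * Φ + β • A)⁻¹)) :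
    (σ2 • (Φᵀ * Φ)⁻¹ - M).PosDef := by
  set B : Matrix (Fin n) (Fin n) ℝ := Φᵀ * Φ with hBdef
  set S : Matrix (Fin n) (Fin n) ℝ := B + β • A with hSdef
  set V : Matrix (Fin n) (Fin n) ℝ := vecMulVec θ0 θ0 with hVdef
  set C : Matrix (Fin n) (Fin n) ℝ :=
    (2 * β * σ2) • A + (β ^ 2 * σ2) • (A * B⁻¹ * A) - (β ^ 2) • (A * V * A) with hCdef
  have hAT : Aᵀ = A := by
    have := hA.1; rwa [IsHermitian, conjTranspose_eq_transpose_of_trivial] at this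
  have hβA : (β • A).PosDef := by
    refine PosDef.of_dotProduct_mulVec_pos ?_ ?_
    · rw [IsHermitian, conjTranspose_smul, conjTranspose_eq_transpose_of_trivial, hAT]
      simp
    · intro x hx
      have := hA.dotProduct_mulVec_pos hx
      simp only [smul_mulVec, dotProduct_smul, smul_eq_mul]
      exact mul_pos hβ this
  have hS : S.PosDef := hΦ.add hβA
  have hBdet : IsUnit B.det := isUnit_iff_ne_zero.mpr hΦ.det_pos.ne'
  have hSdet : IsUnit S.det := isUnit_iff_ne_zero.mpr hS.det_pos.ne'
  have h1 : B * B⁻¹ = 1 := mul_nonsing_inv _ hBdet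
  have h2 : B⁻¹ * B = 1 := nonsing_inv_mul _ hBdet
  have h3 : S * S⁻¹ = 1 := mul_nonsing_inv _ hSdet
  have h4 : S⁻¹ * S = 1 := nonsing_inv_mul _ hSdet
  -- key algebraic identity
  have e1 : S * (σ2 • B⁻¹) * S
      = σ2 • B + (2 * β * σ2) • A + (β ^ 2 * σ2) • (A * B⁻¹ * A) := by
    rw [hSdef]
    simp only [Matrix.add_mul, Matrix.mul_add, Matrix.smul_mul, Matrix.mul_smul,
      Matrix.mul_assoc, nonsing_inv_mul_cancel_left _ _ hBdet, Matrix.mul_one,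
      mul_nonsing_inv_cancel_left _ _ hBdet]
    rw [h2]
    simp only [Matrix.mul_one]
    module
  have e2 : S * M * S = σ2 • B + (β ^ 2) • (A * V * A) := by
    rw [hM]
    simp only [Matrix.mul_add, Matrix.add_mul, Matrix.mul_smul, Matrix.smul_mul,
      Matrix.mul_assoc]
    rw [h4]
    simp only [Matrix.mul_one, mul_nonsing_inv_cancel_left _ _ hSdet]
    try module
  have key : σ2 • B⁻¹ - M = S⁻¹ * C * S⁻¹ := by
    have hmid : S * (σ2 • B⁻¹ - M) * S = C := by
      rw [Matrix.mul_sub, Matrix.sub_mul, e1, e2, hCdef]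
      abel
    calc σ2 • B⁻¹ - M = S⁻¹ * (S * (σ2 • B⁻¹ - M) * S) * S⁻¹ := by
          rw [Matrix.mul_assoc S _ S, nonsing_inv_mul_cancel_left _ _ hSdet,
            mul_nonsing_inv_cancel_right _ _ hSdet]
      _ = S⁻¹ * C * S⁻¹ := by rw [hmid]
  rw [key]
  -- hermitian parts
  have hBinvT : B⁻¹ᵀ = B⁻¹ := by
    have := hΦ.inv.1
    rwa [IsHermitian, conjTranspose_eq_transpose_of_trivial] at this
  have hSinvT : S⁻¹ᵀ = S⁻¹ := by
    have := hS.inv.1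
    rwa [IsHermitian, conjTranspose_eq_transpose_of_trivial] at this
  have hVT : Vᵀ = V := by
    ext i j; simp [hVdef, vecMulVec_apply, mul_comm]
  have hCT : Cᵀ = C := by
    rw [hCdef]
    simp only [transpose_sub, transpose_add, transpose_smul, transpose_mul, hAT, hBinvT, hVT,
      Matrix.mul_assoc]
  refine PosDef.of_dotProduct_mulVec_pos ?_ ?_
  · rw [IsHermitian, conjTranspose_eq_transpose_of_trivial]
    simp only [transpose_mul, hSinvT, hCT, Matrix.mul_assoc]
  · intro x hx
    set y : Fin n → ℝ := S⁻¹ *ᵥ x with hy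
    have hyne : y ≠ 0 := by
      intro h0
      apply hx
      have : S *ᵥ y = x := by
        rw [hy, mulVec_mulVec, h3, one_mulVec]
      rw [h0] at this; simpa using this.symm
    have hdot : x ⬝ᵥ (S⁻¹ * C * S⁻¹) *ᵥ x = y ⬝ᵥ C *ᵥ y := by
      rw [← mulVec_mulVec, ← mulVec_mulVec, dotProduct_mulVec, ← mulVec_transpose, hSinvT]
    have hstar : star x = x := by simp
    rw [hstar, hdot]
    -- expand the quadratic form of C
    set z : Fin n → ℝ := A *ᵥ y with hz
    have hsymm : ∀ a b : Fin n → ℝ, a ⬝ᵥ A *ᵥ b = b ⬝ᵥ A *ᵥ a := by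
      intro a b
      rw [dotProduct_mulVec, ← mulVec_transpose, hAT, dotProduct_comm]
    have hq1 : y ⬝ᵥ (A * B⁻¹ * A) *ᵥ y = z ⬝ᵥ B⁻¹ *ᵥ z := by
      rw [← mulVec_mulVec, ← mulVec_mulVec, dotProduct_mulVec, ← mulVec_transpose, hAT, ← hz]
    have hVz : V *ᵥ z = (θ0 ⬝ᵥ z) • θ0 := by
      ext i
      simp only [hVdef, mulVec, dotProduct, vecMulVec_apply, Pi.smul_apply, smul_eq_mul,
        Finset.sum_mul]
      exact Finset.sum_congr rfl fun j _ => by ring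
    have hq2 : y ⬝ᵥ (A * V * A) *ᵥ y = (θ0 ⬝ᵥ z) ^ 2 := by
      rw [← mulVec_mulVec, ← mulVec_mulVec, ← hz, hVz, mulVec_smul, dotProduct_smul,
        smul_eq_mul, hsymm y θ0, ← hz, dotProduct_comm θ0 z]
      ring
    have hCy : y ⬝ᵥ C *ᵥ y
        = (2 * β * σ2) * (y ⬝ᵥ A *ᵥ y) + (β ^ 2 * σ2) * (z ⬝ᵥ B⁻¹ *ᵥ z)
          - β ^ 2 * (θ0 ⬝ᵥ z) ^ 2 := by
      rw [hCdef]
      simp only [sub_mulVec, add_mulVec, smul_mulVec, dotProduct_sub, dotProduct_add,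
        dotProduct_smul, smul_eq_mul]
      rw [hq1, hq2]
    rw [hCy]
    have ha : 0 < y ⬝ᵥ A *ᵥ y := by simpa using hA.dotProduct_mulVec_pos hyne
    have hc : 0 < θ0 ⬝ᵥ A *ᵥ θ0 := by simpa using hA.dotProduct_mulVec_pos hθ0
    have hb : 0 ≤ z ⬝ᵥ B⁻¹ *ᵥ z := by simpa using hΦ.inv.posSemidef.dotProduct_mulVec_nonneg z
    have hcs : (θ0 ⬝ᵥ z) ^ 2 ≤ (θ0 ⬝ᵥ A *ᵥ θ0) * (y ⬝ᵥ A *ᵥ y) := by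
      rw [hz]; exact posdef_cauchy_schwarz hA θ0 y
    have hβc : β * (θ0 ⬝ᵥ A *ᵥ θ0) < 2 * σ2 := (lt_div_iff₀ hc).mp hβ'
    nlinarith [mul_pos hβ ha, sq_nonneg β, mul_pos (mul_pos hβ hβ) hσ]
end

section
/- Let n ≥ 1, N > 0, σ² > 0, and suppose ΦᵀΦ = N·I_n with Φ ∈ ℝ^{N×n}. Then for P = (θ₀ᵀθ₀/n)I_n with θ₀ ≠ 0, the regularized LS estimator satisfies MSEg(P) = nσ²/(N + nσ²/(θ₀ᵀθ₀)) < nσ²/N, where nσ²/N is the MSEg of the least squares estimator. -/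
open Matrix

theorem ridge_mseg_value_orthonormal {n N : ℕ} (hn : 1 ≤ n) (hN : 0 < N)
    (σ2 : ℝ) (hσ : 0 < σ2)
    (Φ : Matrix (Fin N) (Fin n) ℝ) (hΦ : Φᵀ * Φ = (N : ℝ) • 1)
    (θ0 : Fin n → ℝ) (hθ0 : θ0 ≠ 0)
    (P : Matrix (Fin n) (Fin n) ℝ) (hP : P = ((θ0 ⬝ᵥ θ0) / n) • 1)
    (Q : Matrix (Fin N) (Fin N) ℝ) (hQ : Q = Φ * P * Φᵀ + σ2 • 1) :
    (∑ i, ((P * Φᵀ * Q⁻¹ * Φ) *ᵥ θ0 - θ0) i ^ 2)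
        + σ2 * (P * Φᵀ * Q⁻¹ * Q⁻¹ * Φ * P).trace
      = n * σ2 / ((N : ℝ) + n * σ2 / (θ0 ⬝ᵥ θ0)) ∧
    n * σ2 / ((N : ℝ) + n * σ2 / (θ0 ⬝ᵥ θ0)) < n * σ2 / N := by
  have hnpos : (0:ℝ) < n := by exact_mod_cast hn
  have hNpos : (0:ℝ) < N := by exact_mod_cast hN
  have hSpos : 0 < θ0 ⬝ᵥ θ0 := by
    have hnn : 0 ≤ θ0 ⬝ᵥ θ0 := Finset.sum_nonneg fun i _ => mul_self_nonneg _
    rcases hnn.lt_or_eq with h | h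
    · exact h
    · exact absurd (dotProduct_self_eq_zero.mp h.symm) hθ0
  set S : ℝ := θ0 ⬝ᵥ θ0 with hS
  set c : ℝ := S / n with hc
  have hcpos : 0 < c := div_pos hSpos hnpos
  set d : ℝ := c * N + σ2 with hd
  have hdpos : 0 < d := by positivity
  have hSnc : S = n * c := by rw [hc]; field_simp
  have hP' : P = c • 1 := hP
  have hGG : (Φ * Φᵀ) * (Φ * Φᵀ) = (N : ℝ) • (Φ * Φᵀ) := by
    calc (Φ * Φᵀ) * (Φ * Φᵀ) = Φ * (Φᵀ * Φ) * Φᵀ := by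
          simp only [Matrix.mul_assoc]
      _ = (N : ℝ) • (Φ * Φᵀ) := by
          rw [hΦ, Matrix.mul_smul, Matrix.mul_one, Matrix.smul_mul]
  have hQ' : Q = c • (Φ * Φᵀ) + σ2 • 1 := by
    rw [hQ, hP', Matrix.mul_smul, Matrix.mul_one, Matrix.smul_mul]
  have hinv : Q * (σ2⁻¹ • (1 - (c / d) • (Φ * Φᵀ))) = 1 := by
    rw [hQ']
    simp only [Matrix.mul_smul, Matrix.mul_sub, Matrix.mul_one, Matrix.add_mul,
      Matrix.smul_mul, Matrix.one_mul, smul_smul, hGG]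
    match_scalars <;> field_simp
    rw [hd]; ring
  have hQinv : Q⁻¹ = σ2⁻¹ • (1 - (c / d) • (Φ * Φᵀ)) := inv_eq_right_inv hinv
  have hQiΦ : Q⁻¹ * Φ = d⁻¹ • Φ := by
    rw [hQinv, Matrix.smul_mul, Matrix.sub_mul, Matrix.one_mul, Matrix.smul_mul,
      Matrix.mul_assoc, hΦ, Matrix.mul_smul, Matrix.mul_one]
    match_scalars
    field_simp
    rw [hd]; ring
  have hA : P * Φᵀ * Q⁻¹ * Φ = (c * N / d) • 1 := by
    simp only [Matrix.mul_assoc]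
    rw [hQiΦ, Matrix.mul_smul, hΦ, hP', Matrix.smul_mul, Matrix.one_mul,
      smul_smul, smul_smul]
    congr 1
    field_simp
  have hB : P * Φᵀ * Q⁻¹ * Q⁻¹ * Φ * P = (c ^ 2 * N / d ^ 2) • 1 := by
    simp only [Matrix.mul_assoc, hP', Matrix.mul_smul, Matrix.mul_one,
      Matrix.smul_mul, Matrix.one_mul]
    rw [hQiΦ, Matrix.mul_smul, hQiΦ, Matrix.mul_smul, Matrix.mul_smul, hΦ]
    simp only [smul_smul]
    congr 1
    field_simp
  have hsum : (∑ i, ((P * Φᵀ * Q⁻¹ * Φ) *ᵥ θ0 - θ0) i ^ 2)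
      = (c * N / d - 1) ^ 2 * S := by
    rw [hA, smul_mulVec, one_mulVec, hS, dotProduct, Finset.mul_sum]
    apply Finset.sum_congr rfl
    intro i _
    simp only [Pi.sub_apply, Pi.smul_apply, smul_eq_mul]
    ring
  have htr : (P * Φᵀ * Q⁻¹ * Q⁻¹ * Φ * P).trace = (c ^ 2 * N / d ^ 2) * n := by
    rw [hB, Matrix.trace_smul, Matrix.trace_one]
    simp
  rw [hsum, htr]
  constructor
  · rw [hSnc, hd]
    have hc0 : c ≠ 0 := hcpos.ne'
    have hσ0 : σ2 ≠ 0 := hσ.ne'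
    have hn0 : (n:ℝ) ≠ 0 := hnpos.ne'
    have hd0 : c * N + σ2 ≠ 0 := hdpos.ne'
    have hden : (N:ℝ) + n * σ2 / (n * c) ≠ 0 := by positivity
    field_simp
    ring
  · have h1 : (0:ℝ) < n * σ2 / S := by positivity
    have h2 : (N:ℝ) < N + n * σ2 / S := by linarith
    exact div_lt_div_of_pos_left (by positivity) hNpos h2
end

section
/- Let Φ ∈ ℝ^{N×n} with ΦᵀΦ = N·I_n, σ² > 0, and for η > 0 set P(η) = ηI_n, Q(η) = ηΦΦᵀ + σ²I_N. Then the empirical Bayes criterion F(η) = YᵀQ(η)^{-1}Y + log det Q(η), as a function of η ≥ 0, is minimized at η̂ = max(0, (θ̂ᴸˢ)ᵀθ̂ᴸˢ/n − σ²/N), where θ̂ᴸˢ = (ΦᵀΦ)^{-1}ΦᵀY. -/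
open Matrix

private lemma calc_min_aux (a σ2 : ℝ) (n : ℕ) (ha : 0 ≤ a) (hσ : 0 < σ2) (hn : 1 ≤ n)
    (t : ℝ) (ht : σ2 ≤ t) :
    a / max σ2 (a / n) + n * Real.log (max σ2 (a / n))
      ≤ a / t + n * Real.log t := by
  set s := max σ2 (a / n) with hs
  have hs0 : 0 < s := lt_of_lt_of_le hσ (le_max_left _ _)
  have ht0 : 0 < t := lt_of_lt_of_le hσ ht
  have hn0 : (0:ℝ) < n := by exact_mod_cast hn
  have hkey : (t - s) * (a - n * s) ≤ 0 := by
    rcases le_total (a / n) σ2 with h | h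
    · have hss : s = σ2 := max_eq_left h
      have h1 : 0 ≤ t - s := by rw [hss]; linarith
      have h2 : a ≤ n * s := by
        rw [hss]
        rw [div_le_iff₀ hn0] at h
        nlinarith
      nlinarith
    · have hss : s = a / n := max_eq_right h
      have h2 : a - n * s = 0 := by rw [hss]; field_simp; ring
      rw [h2, mul_zero]
  have hlog : Real.log s - Real.log t ≤ s / t - 1 := by
    have h := Real.log_le_sub_one_of_pos (div_pos hs0 ht0)
    rwa [Real.log_div hs0.ne' ht0.ne'] at h
  have hmul : (n:ℝ) * Real.log s - (n:ℝ) * Real.log t ≤ (n:ℝ) * (s / t - 1) := by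
    nlinarith [mul_le_mul_of_nonneg_left hlog hn0.le]
  have hdiv : a / s - a / t + (n:ℝ) * (s / t - 1) = (t - s) * (a - n * s) / (s * t) := by
    field_simp
    ring
  have hfin : a / s - a / t + (n:ℝ) * (s / t - 1) ≤ 0 := by
    rw [hdiv]
    exact div_nonpos_of_nonpos_of_nonneg hkey (by positivity)
  linarith

theorem ridge_EB_minimizer_orthonormal {n N : ℕ} (hn : 1 ≤ n) (hN : 0 < N)
    (σ2 : ℝ) (hσ : 0 < σ2)
    (Φ : Matrix (Fin N) (Fin n) ℝ) (hΦ : Φᵀ * Φ = (N : ℝ) • 1)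
    (Y : Fin N → ℝ)
    (θLS : Fin n → ℝ) (hθLS : θLS = ((Φᵀ * Φ)⁻¹ * Φᵀ) *ᵥ Y)
    (F : ℝ → ℝ)
    (hF : ∀ η, F η = Y ⬝ᵥ (η • (Φ * Φᵀ) + σ2 • 1)⁻¹ *ᵥ Y
        + Real.log (η • (Φ * Φᵀ) + σ2 • (1 : Matrix (Fin N) (Fin N) ℝ)).det)
    (ηhat : ℝ) (hηhat : ηhat = max 0 ((θLS ⬝ᵥ θLS) / n - σ2 / N)) :
    ∀ η : ℝ, 0 ≤ η → F ηhat ≤ F η := by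
  have hN0 : (0:ℝ) < N := by exact_mod_cast hN
  have hn0 : (0:ℝ) < n := by exact_mod_cast hn
  set z : Fin n → ℝ := Φᵀ *ᵥ Y with hz
  set a : ℝ := (z ⬝ᵥ z) / N with ha
  have hzz : 0 ≤ z ⬝ᵥ z := by
    rw [dotProduct]
    exact Finset.sum_nonneg fun i _ => mul_self_nonneg _
  have ha0 : 0 ≤ a := div_nonneg hzz hN0.le
  have hMM : (Φ * Φᵀ) * (Φ * Φᵀ) = (N:ℝ) • (Φ * Φᵀ) := by
    calc (Φ * Φᵀ) * (Φ * Φᵀ) = Φ * (Φᵀ * Φ) * Φᵀ := by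
          rw [Matrix.mul_assoc, Matrix.mul_assoc, Matrix.mul_assoc]
      _ = (N:ℝ) • (Φ * Φᵀ) := by
          rw [hΦ, Matrix.mul_smul, Matrix.mul_one, Matrix.smul_mul]
  have hquadM : Y ⬝ᵥ (Φ * Φᵀ) *ᵥ Y = z ⬝ᵥ z := by
    rw [← Matrix.mulVec_mulVec, Matrix.dotProduct_mulVec, ← Matrix.mulVec_transpose, hz]
  -- the key formula for F
  have hFeq : ∀ η : ℝ, 0 ≤ η →
      F η = (σ2⁻¹ * (Y ⬝ᵥ Y) - a / σ2 + N * Real.log σ2 - n * Real.log σ2)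
        + (a / (σ2 + η * N) + n * Real.log (σ2 + η * N)) := by
    intro η hη
    set s : ℝ := σ2 + η * N with hsdef
    have hspos : 0 < s := by
      have : 0 ≤ η * N := mul_nonneg hη hN0.le
      rw [hsdef]; linarith
    set c : ℝ := -(η / (σ2 * s)) with hc
    have hQR : (η • (Φ * Φᵀ) + σ2 • (1 : Matrix (Fin N) (Fin N) ℝ))
        * (σ2⁻¹ • 1 + c • (Φ * Φᵀ)) = 1 := by
      have hexp : (η • (Φ * Φᵀ) + σ2 • (1 : Matrix (Fin N) (Fin N) ℝ))
          * (σ2⁻¹ • 1 + c • (Φ * Φᵀ))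
          = (η * σ2⁻¹ + (η * c * N + σ2 * c)) • (Φ * Φᵀ) + (σ2 * σ2⁻¹) • 1 := by
        rw [add_mul, mul_add, mul_add, smul_mul_assoc, smul_mul_assoc, smul_mul_assoc,
          smul_mul_assoc, mul_smul_comm, mul_smul_comm, mul_smul_comm, mul_smul_comm,
          Matrix.mul_one, Matrix.one_mul, Matrix.one_mul, hMM]
        module
      have hc0 : η * σ2⁻¹ + (η * c * N + σ2 * c) = 0 := by
        rw [hc, hsdef]
        field_simp
        ring
      rw [hexp, hc0, zero_smul, zero_add, mul_inv_cancel₀ hσ.ne', one_smul]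
    have hQinv : (η • (Φ * Φᵀ) + σ2 • (1 : Matrix (Fin N) (Fin N) ℝ))⁻¹
        = σ2⁻¹ • 1 + c • (Φ * Φᵀ) := Matrix.inv_eq_right_inv hQR
    have hdet : (η • (Φ * Φᵀ) + σ2 • (1 : Matrix (Fin N) (Fin N) ℝ)).det
        = σ2 ^ N * (s / σ2) ^ n := by
      have hcoef : σ2 * (η / σ2) = η := by field_simp
      have h1 : η • (Φ * Φᵀ) + σ2 • (1 : Matrix (Fin N) (Fin N) ℝ)
          = σ2 • (1 + ((η / σ2) • Φ) * Φᵀ) := by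
        rw [Matrix.smul_mul, smul_add, smul_smul, hcoef, add_comm]
      have h2 : Φᵀ * ((η / σ2) • Φ) = ((η / σ2) * N) • (1 : Matrix (Fin n) (Fin n) ℝ) := by
        rw [Matrix.mul_smul, hΦ, smul_smul]
      have h3 : (1 : Matrix (Fin n) (Fin n) ℝ) + ((η / σ2) * N) • 1 = (s / σ2) • 1 := by
        have hx : s / σ2 = 1 + (η / σ2) * N := by
          rw [hsdef]; field_simp; try ring
        rw [hx, add_smul, one_smul]
      rw [h1, Matrix.det_smul, Matrix.det_one_add_mul_comm, h2, h3, Matrix.det_smul,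
        Matrix.det_one, mul_one, Fintype.card_fin, Fintype.card_fin]
    have hlogdet : Real.log (σ2 ^ N * (s / σ2) ^ n)
        = N * Real.log σ2 + n * (Real.log s - Real.log σ2) := by
      rw [Real.log_mul (by positivity) (by positivity), Real.log_pow, Real.log_pow,
        Real.log_div hspos.ne' hσ.ne']
      try push_cast
      try ring
    have hquad : Y ⬝ᵥ (σ2⁻¹ • 1 + c • (Φ * Φᵀ)) *ᵥ Y
        = σ2⁻¹ * (Y ⬝ᵥ Y) + c * (z ⬝ᵥ z) := by
      rw [Matrix.add_mulVec, Matrix.smul_mulVec, Matrix.smul_mulVec,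
        Matrix.one_mulVec, dotProduct_add, dotProduct_smul, dotProduct_smul, hquadM]
      simp [smul_eq_mul]
    have hsc : c * (z ⬝ᵥ z) = a / s - a / σ2 := by
      rw [hc, ha, hsdef]
      field_simp
      ring
    rw [hF, hQinv, hdet, hquad, hlogdet]
    linarith [hsc]
  have hθθ : θLS ⬝ᵥ θLS = a / N := by
    have hinv : (Φᵀ * Φ)⁻¹ = (N:ℝ)⁻¹ • (1 : Matrix (Fin n) (Fin n) ℝ) := by
      apply Matrix.inv_eq_right_inv
      rw [hΦ, smul_mul_assoc, mul_smul_comm, Matrix.one_mul, smul_smul,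
        mul_inv_cancel₀ hN0.ne', one_smul]
    rw [hθLS, hinv, Matrix.smul_mul, Matrix.one_mul, Matrix.smul_mulVec, ← hz,
      dotProduct_smul, smul_dotProduct, ha]
    field_simp
    try ring
    rw [mul_comm, ← mul_assoc, ← mul_pow, inv_mul_cancel₀ hN0.ne', one_pow, one_mul]
  have hηhat0 : 0 ≤ ηhat := hηhat ▸ le_max_left 0 _
  have hmax : σ2 + ηhat * N = max σ2 (a / n) := by
    have hrw : (a / N) / n - σ2 / N = (a / n - σ2) / N := by
      field_simp
    rw [hηhat, hθθ, hrw]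
    rcases le_total (a / n) σ2 with h | h
    · rw [max_eq_left (div_nonpos_of_nonpos_of_nonneg (by linarith) hN0.le), zero_mul,
        add_zero, max_eq_left h]
    · rw [max_eq_right (div_nonneg (by linarith) hN0.le), max_eq_right h]
      field_simp
      ring
  intro η hη
  rw [hFeq η hη, hFeq ηhat hηhat0, hmax]
  have hσt : σ2 ≤ σ2 + η * N := by nlinarith
  exact add_le_add le_rfl (calc_min_aux a σ2 n ha0 hσ hn (σ2 + η * N) hσt)
end

section
/- Let P be symmetric positive definite, Φ ∈ ℝ^{N×n} with ΦᵀΦ invertible, σ² > 0, Q = ΦPΦᵀ + σ²I_N, S = P + σ²(ΦᵀΦ)^{-1}, θ̂ᴸˢ = (ΦᵀΦ)^{-1}ΦᵀY. Then YᵀQ^{-1}Y + YᵀΦ(ΦᵀΦ)^{-1}ΦᵀY/σ² − YᵀY/σ² = (θ̂ᴸˢ)ᵀS^{-1}θ̂ᴸˢ. -/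
open Matrix

private lemma posSemidef_smul {k : ℕ} {M : Matrix (Fin k) (Fin k) ℝ}
    (hM : M.PosSemidef) {c : ℝ} (hc : 0 ≤ c) : (c • M).PosSemidef := by
  refine ⟨?_, fun x => ?_⟩
  · unfold Matrix.IsHermitian
    rw [conjTranspose_smul, hM.1]
    simp
  · exact (hM.smul hc).2 x


private lemma quadform {N n : ℕ} (B : Matrix (Fin N) (Fin n) ℝ)
    (C : Matrix (Fin n) (Fin n) ℝ) (Y : Fin N → ℝ) :
    (Bᵀ *ᵥ Y) ⬝ᵥ C *ᵥ (Bᵀ *ᵥ Y) = Y ⬝ᵥ (B * C * Bᵀ) *ᵥ Y := by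
  rw [mulVec_transpose, dotProduct_mulVec, vecMul_vecMul,
    show Y ᵥ* B = Bᵀ *ᵥ Y from (mulVec_transpose B Y).symm,
    dotProduct_mulVec, vecMul_vecMul, dotProduct_mulVec Y]

theorem EB_quadratic_identity {n N : ℕ}
    (P : Matrix (Fin n) (Fin n) ℝ) (hP : P.PosDef)
    (Φ : Matrix (Fin N) (Fin n) ℝ) (hΦ : IsUnit (Φᵀ * Φ))
    (σ2 : ℝ) (hσ : 0 < σ2)
    (Q : Matrix (Fin N) (Fin N) ℝ) (hQ : Q = Φ * P * Φᵀ + σ2 • 1)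
    (S : Matrix (Fin n) (Fin n) ℝ) (hS : S = P + σ2 • (Φᵀ * Φ)⁻¹)
    (Y : Fin N → ℝ)
    (θLS : Fin n → ℝ) (hθLS : θLS = ((Φᵀ * Φ)⁻¹ * Φᵀ) *ᵥ Y) :
    Y ⬝ᵥ Q⁻¹ *ᵥ Y + (Y ⬝ᵥ (Φ * (Φᵀ * Φ)⁻¹ * Φᵀ) *ᵥ Y) / σ2 - (Y ⬝ᵥ Y) / σ2
      = θLS ⬝ᵥ S⁻¹ *ᵥ θLS := by
  set A : Matrix (Fin n) (Fin n) ℝ := Φᵀ * Φ with hA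
  have hAdet : IsUnit A.det := (isUnit_iff_isUnit_det A).mp hΦ
  have hAinv : A * A⁻¹ = 1 := mul_nonsing_inv A hAdet
  have hAinv' : A⁻¹ * A = 1 := nonsing_inv_mul A hAdet
  -- A is positive semidefinite, hence A⁻¹ is too
  have hApsd : A.PosSemidef := by
    have := posSemidef_conjTranspose_mul_self Φ
    simpa [conjTranspose_eq_transpose_of_trivial] using this
  have hAipsd : (A⁻¹).PosSemidef := hApsd.inv
  -- S is positive definite
  have hSpd : S.PosDef := by
    rw [hS]
    exact hP.add_posSemidef (posSemidef_smul hAipsd hσ.le)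
  have hSdet : IsUnit S.det := isUnit_iff_ne_zero.mpr hSpd.det_pos.ne'
  have hSinv : S * S⁻¹ = 1 := mul_nonsing_inv S hSdet
  -- A is symmetric, hence so is A⁻¹
  have hAsymm : Aᵀ = A := by rw [hA, transpose_mul, transpose_transpose]
  have hAisymm : (A⁻¹)ᵀ = A⁻¹ := by rw [transpose_nonsing_inv, hAsymm]
  -- The explicit inverse of Q
  set R : Matrix (Fin N) (Fin N) ℝ :=
    σ2⁻¹ • (1 - Φ * A⁻¹ * Φᵀ) + Φ * A⁻¹ * S⁻¹ * A⁻¹ * Φᵀ with hR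
  have hQR : Q * R = 1 := by
    rw [hQ, hR]
    have h1 : (Φ * P * Φᵀ + σ2 • 1) * (σ2⁻¹ • (1 - Φ * A⁻¹ * Φᵀ))
        = 1 - Φ * A⁻¹ * Φᵀ := by
      rw [Matrix.add_mul, Matrix.mul_smul, Matrix.mul_sub, Matrix.mul_one]
      have : Φ * P * Φᵀ * (Φ * A⁻¹ * Φᵀ) = Φ * P * Φᵀ := by
        calc Φ * P * Φᵀ * (Φ * A⁻¹ * Φᵀ)
            = Φ * P * (A * A⁻¹) * Φᵀ := by
              rw [hA]; simp only [Matrix.mul_assoc]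
          _ = Φ * P * Φᵀ := by rw [hAinv, Matrix.mul_one]
      rw [this, sub_self, smul_zero, zero_add, Matrix.smul_mul, Matrix.one_mul,
        smul_smul, mul_inv_cancel₀ hσ.ne', one_smul]
    have h2 : (Φ * P * Φᵀ + σ2 • 1) * (Φ * A⁻¹ * S⁻¹ * A⁻¹ * Φᵀ)
        = Φ * A⁻¹ * Φᵀ := by
      have e1 : Φ * P * Φᵀ * (Φ * A⁻¹ * S⁻¹ * A⁻¹ * Φᵀ)
          = Φ * (P * (A * A⁻¹)) * S⁻¹ * A⁻¹ * Φᵀ := by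
        rw [hA]; simp only [Matrix.mul_assoc]
      rw [Matrix.add_mul, e1, hAinv, Matrix.mul_one, Matrix.smul_mul, Matrix.one_mul]
      have e2 : Φ * P * S⁻¹ * A⁻¹ * Φᵀ + σ2 • (Φ * A⁻¹ * S⁻¹ * A⁻¹ * Φᵀ)
          = Φ * ((P + σ2 • A⁻¹) * S⁻¹) * A⁻¹ * Φᵀ := by
        simp only [Matrix.add_mul, Matrix.mul_add, Matrix.smul_mul, Matrix.mul_smul,
          Matrix.mul_assoc]
      rw [e2, ← hS, hSinv, Matrix.mul_one]
    rw [Matrix.mul_add, h1, h2]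
    abel
  have hQinv : Q⁻¹ = R := inv_eq_right_inv hQR
  -- Rewrite the quadratic form on the right-hand side
  have hBT : (Φ * A⁻¹)ᵀ = A⁻¹ * Φᵀ := by rw [transpose_mul, hAisymm]
  have hRHS : θLS ⬝ᵥ S⁻¹ *ᵥ θLS = Y ⬝ᵥ (Φ * A⁻¹ * S⁻¹ * A⁻¹ * Φᵀ) *ᵥ Y := by
    rw [hθLS, ← hBT, quadform, hBT]
    simp only [Matrix.mul_assoc]
  rw [hQinv, hRHS, hR]
  rw [add_mulVec, dotProduct_add, smul_mulVec, dotProduct_smul,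
    sub_mulVec, Matrix.one_mulVec, dotProduct_sub, smul_eq_mul]
  have : Y ⬝ᵥ (Φ * A⁻¹ * Φᵀ) *ᵥ Y = Y ⬝ᵥ (Φ * (Φᵀ * Φ)⁻¹ * Φᵀ) *ᵥ Y := by rw [hA]
  rw [this]
  field_simp
  ring
end
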